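/- In 𝔰𝔬(3) ⊕ 𝔰𝔬(3) with inner product ⟨e_i,e_j⟩ = δ_{ij}, ⟨f_i,f_j⟩ = a²δ_{ij}, ⟨e_i,f_j⟩ = 0 for a > 0, a ≠ 1, let W = span(e₁+f₁, e₂−f₂, e₃+f₃) with orthonormal frame Y₁,Y₂,Y₃ obtained by normalizing these vectors, and Y₄ = (√(1+a²)/a)(e₁ − f₁/a²). Then Σ_{i=1}^3 ⟨[Y_i,Y₁]^T, [Y_i,Y₄]^T⟩ = -4(a²-1)/(a(1+a²)²) ≠ 0, where (·)^T is the orthogonal projection onto W. -/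

import Mathlib

open scoped RealInnerProductSpace

lemma proj_span_eq {E : Type*} [NormedAddCommGroup E] [InnerProductSpace ℝ E]
    [FiniteDimensional ℝ E]
    (W : Submodule ℝ E) (S : Set E) (hW : W = Submodule.span ℝ S)
    (v w : E) (hw : w ∈ W) (h : ∀ u ∈ S, ⟪v - w, u⟫ = 0) :
    ((Submodule.orthogonalProjection W v : E)) = w := by
  refine (Submodule.starProjection_apply W v).symm.trans (Submodule.eq_starProjection_of_mem_of_inner_eq_zero hw ?_)
  intro u hu
  rw [hW] at hu
  have hker : Submodule.span ℝ S ≤ LinearMap.ker (innerₛₗ ℝ (v - w)) := by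
    rw [Submodule.span_le]
    intro x hx
    simpa [inner_sub_left] using h x hx
  simpa [inner_sub_left] using hker hu

set_option maxHeartbeats 1000000 in
/-- In `𝔰𝔬(3) ⊕ 𝔰𝔬(3)` with the biinvariant inner product scaled by `a²`
on the second factor, with `W = span(e₁+f₁, e₂−f₂, e₃+f₃)`, the orthonormal frame
`Y₁,Y₂,Y₃` of `W` and `Y₄ = (√(1+a²)/a)(e₁ − f₁/a²)`, one has
`Σᵢ ⟪[Yᵢ,Y₁]^T, [Yᵢ,Y₄]^T⟫ = -4(a²-1)/(a(1+a²)²) ≠ 0`. -/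
theorem stmt13 {E : Type*} [NormedAddCommGroup E] [InnerProductSpace ℝ E]
    [FiniteDimensional ℝ E]
    (b : E →ₗ[ℝ] E →ₗ[ℝ] E)
    (hskew : ∀ X Y : E, b X Y = - b Y X)
    (e f : Fin 3 → E)
    (he01 : b (e 0) (e 1) = e 2) (he12 : b (e 1) (e 2) = e 0) (he20 : b (e 2) (e 0) = e 1)
    (hf01 : b (f 0) (f 1) = f 2) (hf12 : b (f 1) (f 2) = f 0) (hf20 : b (f 2) (f 0) = f 1)
    (hef : ∀ i j, b (e i) (f j) = 0)
    (a : ℝ) (ha : 0 < a) (ha1 : a ≠ 1)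
    (hee : ∀ i j, ⟪e i, e j⟫ = if i = j then 1 else 0)
    (hff : ∀ i j, ⟪f i, f j⟫ = if i = j then a ^ 2 else 0)
    (heforth : ∀ i j, ⟪e i, f j⟫ = 0)
    (W : Submodule ℝ E)
    (hW : W = Submodule.span ℝ {e 0 + f 0, e 1 - f 1, e 2 + f 2})
    (Y : Fin 3 → E)
    (hY : Y = ![(Real.sqrt (1 + a ^ 2))⁻¹ • (e 0 + f 0),
      (Real.sqrt (1 + a ^ 2))⁻¹ • (e 1 - f 1),
      (Real.sqrt (1 + a ^ 2))⁻¹ • (e 2 + f 2)])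
    (Y4 : E)
    (hY4 : Y4 = (Real.sqrt (1 + a ^ 2) / a) • (e 0 - (a ^ 2)⁻¹ • f 0)) :
    (∑ i : Fin 3, ⟪((Submodule.orthogonalProjection W (b (Y i) (Y 0))) : E),
        ((Submodule.orthogonalProjection W (b (Y i) Y4)) : E)⟫)
      = -4 * (a ^ 2 - 1) / (a * (1 + a ^ 2) ^ 2)
    ∧ -4 * (a ^ 2 - 1) / (a * (1 + a ^ 2) ^ 2) ≠ 0 := by
  have ha0 : a ≠ 0 := ne_of_gt ha
  have hden : (1 : ℝ) + a ^ 2 ≠ 0 := by positivity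
  have hs2 : Real.sqrt (1 + a ^ 2) ^ 2 = 1 + a ^ 2 :=
    Real.sq_sqrt (by positivity)
  have hsne : Real.sqrt (1 + a ^ 2) ≠ 0 := by positivity
  have hbb : ∀ x : E, b x x = 0 := by
    intro x
    have h2 : b x x + b x x = 0 := by nth_rewrite 1 [hskew x x]; simp
    have h3 : (2:ℝ) • b x x = 0 := by rw [two_smul]; exact h2
    simpa using (smul_eq_zero.mp h3).resolve_left (by norm_num)
  have hfe : ∀ i j, b (f i) (e j) = 0 := by intro i j; rw [hskew]; simp [hef]
  have he10 : b (e 1) (e 0) = -e 2 := by rw [hskew, he01]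
  have he02 : b (e 0) (e 2) = -e 1 := by rw [hskew, he20]
  have he21 : b (e 2) (e 1) = -e 0 := by rw [hskew, he12]
  have hf10 : b (f 1) (f 0) = -f 2 := by rw [hskew, hf01]
  have hf02 : b (f 0) (f 2) = -f 1 := by rw [hskew, hf20]
  have hf21 : b (f 2) (f 1) = -f 0 := by rw [hskew, hf12]
  have hfein : ∀ i j, ⟪f i, e j⟫ = 0 := by
    intro i j; rw [real_inner_comm]; exact heforth j i
  -- bracket values
  have hv00 : b (Y 0) (Y 0) = 0 := hbb _
  have hv10 : b (Y 1) (Y 0) = (1 + a ^ 2)⁻¹ • (f 2 - e 2) := by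
    rw [hY]
    simp only [Matrix.cons_val_zero, Matrix.cons_val_one, Matrix.head_cons,
      map_add, map_sub, map_smul, LinearMap.add_apply, LinearMap.sub_apply,
      LinearMap.smul_apply, he10, hf10, hef, hfe, hbb]
    match_scalars <;> field_simp <;> rw [hs2]
  have hv20 : b (Y 2) (Y 0) = (1 + a ^ 2)⁻¹ • (e 1 + f 1) := by
    rw [hY]
    simp only [Matrix.cons_val_zero, Matrix.cons_val_one, Matrix.head_cons,
      Matrix.cons_val_two, Matrix.tail_cons,
      map_add, map_sub, map_smul, LinearMap.add_apply, LinearMap.sub_apply,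
      LinearMap.smul_apply, he20, hf20, hef, hfe, hbb]
    match_scalars <;> field_simp <;> exact hs2.symm
  have hv04 : b (Y 0) Y4 = 0 := by
    rw [hY, hY4]
    simp only [Matrix.cons_val_zero,
      map_add, map_sub, map_smul, LinearMap.add_apply, LinearMap.sub_apply,
      LinearMap.smul_apply, hef, hfe, hbb]
    simp
  have hv14 : b (Y 1) Y4 = -(a⁻¹ • e 2) - (a ^ 3)⁻¹ • f 2 := by
    rw [hY, hY4]
    simp only [Matrix.cons_val_zero, Matrix.cons_val_one, Matrix.head_cons,
      map_add, map_sub, map_smul, LinearMap.add_apply, LinearMap.sub_apply,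
      LinearMap.smul_apply, he10, hf10, hef, hfe, hbb]
    match_scalars <;> field_simp <;> ring
  have hv24 : b (Y 2) Y4 = a⁻¹ • e 1 - (a ^ 3)⁻¹ • f 1 := by
    rw [hY, hY4]
    simp only [Matrix.cons_val_zero, Matrix.cons_val_one, Matrix.head_cons,
      Matrix.cons_val_two, Matrix.tail_cons,
      map_add, map_sub, map_smul, LinearMap.add_apply, LinearMap.sub_apply,
      LinearMap.smul_apply, he20, hf20, hef, hfe, hbb]
    match_scalars <;> field_simp <;> ring
  -- projections
  have hmem2 : e 2 + f 2 ∈ W := by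
    rw [hW]; exact Submodule.subset_span (by simp)
  have hmem1 : e 1 - f 1 ∈ W := by
    rw [hW]; exact Submodule.subset_span (by simp)
  have hp10 : ((Submodule.orthogonalProjection W (b (Y 1) (Y 0))) : E)
      = ((a ^ 2 - 1) / (1 + a ^ 2) ^ 2) • (e 2 + f 2) := by
    rw [hv10]
    refine proj_span_eq W _ hW _ _ (Submodule.smul_mem _ _ hmem2) ?_
    intro u hu
    simp only [Set.mem_insert_iff, Set.mem_singleton_iff] at hu
    rcases hu with rfl | rfl | rfl <;>
      simp [inner_sub_left, inner_sub_right, inner_add_left, inner_add_right,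
        real_inner_smul_left, real_inner_smul_right, hee, hff, heforth, hfein, -inner_self_eq_norm_sq_to_K] <;>
      field_simp <;> ring
  have hp20 : ((Submodule.orthogonalProjection W (b (Y 2) (Y 0))) : E)
      = ((1 - a ^ 2) / (1 + a ^ 2) ^ 2) • (e 1 - f 1) := by
    rw [hv20]
    refine proj_span_eq W _ hW _ _ (Submodule.smul_mem _ _ hmem1) ?_
    intro u hu
    simp only [Set.mem_insert_iff, Set.mem_singleton_iff] at hu
    rcases hu with rfl | rfl | rfl <;>
      simp [inner_sub_left, inner_sub_right, inner_add_left, inner_add_right,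
        real_inner_smul_left, real_inner_smul_right, hee, hff, heforth, hfein, -inner_self_eq_norm_sq_to_K] <;>
      field_simp <;> ring
  have hp14 : ((Submodule.orthogonalProjection W (b (Y 1) Y4)) : E)
      = (-2 / (a * (1 + a ^ 2))) • (e 2 + f 2) := by
    rw [hv14]
    refine proj_span_eq W _ hW _ _ (Submodule.smul_mem _ _ hmem2) ?_
    intro u hu
    simp only [Set.mem_insert_iff, Set.mem_singleton_iff] at hu
    rcases hu with rfl | rfl | rfl <;>
      simp [inner_sub_left, inner_sub_right, inner_add_left, inner_add_right,
        inner_neg_left, inner_neg_right,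
        real_inner_smul_left, real_inner_smul_right, hee, hff, heforth, hfein, -inner_self_eq_norm_sq_to_K] <;>
      field_simp <;> ring
  have hp24 : ((Submodule.orthogonalProjection W (b (Y 2) Y4)) : E)
      = (2 / (a * (1 + a ^ 2))) • (e 1 - f 1) := by
    rw [hv24]
    refine proj_span_eq W _ hW _ _ (Submodule.smul_mem _ _ hmem1) ?_
    intro u hu
    simp only [Set.mem_insert_iff, Set.mem_singleton_iff] at hu
    rcases hu with rfl | rfl | rfl <;>
      simp [inner_sub_left, inner_sub_right, inner_add_left, inner_add_right,
        inner_neg_left, inner_neg_right,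
        real_inner_smul_left, real_inner_smul_right, hee, hff, heforth, hfein, -inner_self_eq_norm_sq_to_K] <;>
      field_simp <;> ring
  constructor
  · rw [Fin.sum_univ_three, hp10, hp20, hp14, hp24, hv00, hv04, map_zero]
    simp [ZeroMemClass.coe_zero, inner_zero_left, inner_zero_right,
      inner_sub_left, inner_sub_right, inner_add_left, inner_add_right,
      real_inner_smul_left, real_inner_smul_right, hee, hff, heforth, hfein, -inner_self_eq_norm_sq_to_K]
    field_simp
    ring
  · apply div_ne_zero
    · intro h
      have h1 : (a - 1) * (a + 1) = 0 := by nlinarith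
      rcases mul_eq_zero.mp h1 with h2 | h2
      · exact ha1 (by linarith)
      · linarith
    · positivity
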